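/- arXiv:2012.03304 — 6 statements merged into one kernel-verified Lean document; each statement's English description precedes it below -/
import Mathlib

section
/- Let m be an automorphism of 𝔻 written as m = r_τ ∘ b_α with α ∈ 𝔻, τ ∈ 𝕋, and assume |τ - 1| < 2|α|. Then m, viewed as a continuous self-map of the closed disc, has exactly two fixed points, both lying on the unit circle 𝕋. -/
open Complex

theorem hyperbolic_two_fixed_points (α τ : ℂ) (hα : ‖α‖ < 1) (hτ : ‖τ‖ = 1)
    (hhyp : ‖τ - 1‖ < 2 * ‖α‖) :
    ∃ η₁ η₂ : ℂ, η₁ ≠ η₂ ∧ ‖η₁‖ = 1 ∧ ‖η₂‖ = 1 ∧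
      ∀ z : ℂ, ‖z‖ ≤ 1 →
        (τ * ((z - α) / (1 - (starRingEnd ℂ) α * z)) = z ↔ z = η₁ ∨ z = η₂) := by
  have hα0 : α ≠ 0 := by
    intro h
    rw [h] at hhyp
    simp at hhyp
    exact absurd hhyp (not_lt.2 (norm_nonneg _))
  have hca : (starRingEnd ℂ) α ≠ 0 := by simpa using hα0
  obtain ⟨σ, hσ⟩ := IsAlgClosed.exists_pow_nat_eq τ (n := 2) (by norm_num)
  have hσabs : ‖σ‖ = 1 := by
    have h := congrArg (‖·‖) hσ
    rw [norm_pow, hτ] at h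
    nlinarith [norm_nonneg σ]
  have hσ1 : σ * (starRingEnd ℂ) σ = 1 := by
    rw [Complex.mul_conj]
    norm_cast
    rw [Complex.normSq_eq_norm_sq, hσabs]
    norm_num
  have hσ0 : σ ≠ 0 := by
    intro h; rw [h] at hσabs; simp at hσabs
  set t : ℝ := 4 * Complex.normSq α - Complex.normSq (τ - 1) with ht
  have htpos : 0 < t := by
    have h1 : ‖τ - 1‖ ^ 2 < (2 * ‖α‖) ^ 2 := by
      nlinarith [norm_nonneg (τ - 1)]
    rw [ht, ← Complex.sq_norm, ← Complex.sq_norm]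
    nlinarith
  set r : ℝ := Real.sqrt t with hrdef
  have hrpos : 0 < r := Real.sqrt_pos.2 htpos
  have hr0 : (r : ℂ) ≠ 0 := by exact_mod_cast hrpos.ne'
  have hrr : (r : ℂ) * r = 4 * (α * (starRingEnd ℂ) α) - (τ - 1) * ((starRingEnd ℂ) τ - 1) := by
    have h1 : (r : ℝ) * r = t := Real.mul_self_sqrt htpos.le
    have h2 : ((t : ℝ) : ℂ) = 4 * (α * (starRingEnd ℂ) α) - (τ - 1) * ((starRingEnd ℂ) τ - 1) := by
      rw [ht]
      push_cast
      rw [← Complex.mul_conj, ← Complex.mul_conj]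
      simp [map_sub, map_one]
    calc (r : ℂ) * r = ((r * r : ℝ) : ℂ) := by push_cast; ring
      _ = ((t : ℝ) : ℂ) := by rw [h1]
      _ = _ := h2
  have hστ : (starRingEnd ℂ) τ = (starRingEnd ℂ) σ ^ 2 := by rw [← hσ, map_pow]
  set η₁ : ℂ := (-(τ - 1) + σ * r) / (2 * (starRingEnd ℂ) α) with hη₁
  set η₂ : ℂ := (-(τ - 1) - σ * r) / (2 * (starRingEnd ℂ) α) with hη₂
  have hne : η₁ ≠ η₂ := by
    intro h
    rw [hη₁, hη₂, div_eq_div_iff (by simpa using hca) (by simpa using hca)] at h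
    have h2 := mul_right_cancel₀ (show (2 : ℂ) * (starRingEnd ℂ) α ≠ 0 by simpa using hca) h
    have : σ * r = 0 := by linear_combination h2 / 2
    exact (mul_ne_zero hσ0 hr0) this
  have hτ1 : τ * (starRingEnd ℂ) τ = 1 := by
    rw [Complex.mul_conj]
    norm_cast
    rw [Complex.normSq_eq_norm_sq, hτ]
    norm_num
  have habs1 : ∀ η : ℂ, η * (starRingEnd ℂ) η = 1 → ‖η‖ = 1 := by
    intro η h
    have h2 : (Complex.normSq η : ℂ) = 1 := by rw [← Complex.mul_conj]; exact h
    have h3 : Complex.normSq η = 1 := by exact_mod_cast h2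
    rw [← Complex.sq_norm] at h3
    nlinarith [norm_nonneg η]
  have hconj1 : (starRingEnd ℂ) η₁ = (-((starRingEnd ℂ) τ - 1) + (starRingEnd ℂ) σ * r) / (2 * α) := by
    rw [hη₁]
    simp [map_div₀, Complex.conj_ofReal, map_ofNat]
  have hconj2 : (starRingEnd ℂ) η₂ = (-((starRingEnd ℂ) τ - 1) - (starRingEnd ℂ) σ * r) / (2 * α) := by
    rw [hη₂]
    simp [map_div₀, Complex.conj_ofReal, map_ofNat]
  have he1 : ‖η₁‖ = 1 := by
    apply habs1
    rw [hη₁, hconj1, div_mul_div_comm,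
      div_eq_one_iff_eq (by simp [hα0, hca] : (2 * (starRingEnd ℂ) α) * (2 * α) ≠ 0)]
    linear_combination hrr + ((r : ℂ) * r - r * (σ + (starRingEnd ℂ) σ)) * hσ1 +
      (r * (starRingEnd ℂ) σ) * hσ - (r * σ) * hστ
  have he2 : ‖η₂‖ = 1 := by
    apply habs1
    rw [hη₂, hconj2, div_mul_div_comm,
      div_eq_one_iff_eq (by simp [hα0, hca] : (2 * (starRingEnd ℂ) α) * (2 * α) ≠ 0)]
    linear_combination hrr + ((r : ℂ) * r + r * (σ + (starRingEnd ℂ) σ)) * hσ1 -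
      (r * (starRingEnd ℂ) σ) * hσ + (r * σ) * hστ
  have hAB : (-(τ - 1) + σ * r) * (-(τ - 1) - σ * r) = -(4 * (τ * (α * (starRingEnd ℂ) α))) := by
    linear_combination (-((r : ℂ) * r)) * hσ - τ * hrr + (τ - 1) * hτ1
  have hsum' : (starRingEnd ℂ) α * η₁ + (starRingEnd ℂ) α * η₂ = -(τ - 1) := by
    rw [hη₁, hη₂]
    field_simp
    ring
  have hprod' : (starRingEnd ℂ) α * (η₁ * η₂) = -(τ * α) := by
    rw [hη₁, hη₂, div_mul_div_comm, hAB]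
    field_simp
    ring
  have hfact : ∀ z : ℂ, τ * (z - α) - z * (1 - (starRingEnd ℂ) α * z)
      = (starRingEnd ℂ) α * (z - η₁) * (z - η₂) := by
    intro z
    linear_combination z * hsum' - hprod'
  refine ⟨η₁, η₂, hne, he1, he2, ?_⟩
  intro z hz
  have hz1 : 1 - (starRingEnd ℂ) α * z ≠ 0 := by
    intro h
    have h2 : (starRingEnd ℂ) α * z = 1 := by linear_combination -h
    have h3 := congrArg (‖·‖) h2
    rw [norm_mul, Complex.norm_conj, norm_one] at h3
    nlinarith [norm_nonneg z, norm_nonneg α]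
  rw [← mul_div_assoc, div_eq_iff hz1, ← sub_eq_zero, hfact z, mul_assoc]
  simp [mul_eq_zero, sub_eq_zero, hca]
end

section
/- Let m be an automorphism of 𝔻 written as m = r_τ ∘ b_α with α ∈ 𝔻, τ ∈ 𝕋, and assume |τ - 1| > 2|α|. Then m has exactly one fixed point in the closed unit disc, and that fixed point lies in the open disc 𝔻. -/
open Complex

private lemma real_aux (x y : ℝ) (hx : 0 ≤ x) (hxy : x * y = 1) (hsum : 2 < x + y) :
    (x < 1 ∧ 1 < y) ∨ (y < 1 ∧ 1 < x) := by
  rcases lt_trichotomy x 1 with h | h | h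
  · left; constructor
    · exact h
    · nlinarith
  · exfalso; nlinarith
  · right; constructor
    · nlinarith
    · exact h

private lemma main_aux (α τ a z₀ r' : ℂ) (hα : ‖α‖ < 1) (ha : a = (starRingEnd ℂ) α)
    (ha0 : a ≠ 0) (hz0 : ‖z₀‖ < 1) (hr' : 1 < ‖r'‖)
    (key : ∀ z : ℂ, a*z^2 + (τ-1)*z - τ*α = a*(z-z₀)*(z-r')) :
    ‖z₀‖ < 1 ∧ τ * ((z₀ - α) / (1 - (starRingEnd ℂ) α * z₀)) = z₀ ∧
      ∀ z : ℂ, ‖z‖ ≤ 1 →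
        τ * ((z - α) / (1 - (starRingEnd ℂ) α * z)) = z → z = z₀ := by
  have haabs : ‖a‖ = ‖α‖ := by simp [ha]
  have hden : ∀ z : ℂ, ‖z‖ ≤ 1 → 1 - (starRingEnd ℂ) α * z ≠ 0 := by
    intro z hz h
    have h1 : (starRingEnd ℂ) α * z = 1 := by linear_combination -h
    have h2 : ‖(starRingEnd ℂ) α * z‖ = 1 := by rw [h1]; simp
    rw [norm_mul, Complex.norm_conj] at h2
    nlinarith [norm_nonneg α, norm_nonneg z]
  have hden₀ := hden z₀ hz0.le
  have eq1 : τ * (z₀ - α) = z₀ * (1 - a * z₀) := by linear_combination key z₀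
  refine ⟨hz0, ?_, ?_⟩
  · rw [mul_div_assoc', div_eq_iff hden₀]
    rw [← ha] at hden₀ ⊢
    linear_combination eq1
  · intro z hz hfix
    have hdz := hden z hz
    rw [mul_div_assoc', div_eq_iff hdz] at hfix
    have hq : a * (z - z₀) * (z - r') = 0 := by
      rw [← key z, ← ha] at *
      linear_combination hfix
    rcases mul_eq_zero.1 hq with h | h
    · rcases mul_eq_zero.1 h with h | h
      · exact absurd h ha0
      · exact sub_eq_zero.1 h
    · exfalso
      have : z = r' := sub_eq_zero.1 h
      rw [this] at hz
      linarith

theorem elliptic_one_fixed_point (α τ : ℂ) (hα : ‖α‖ < 1) (hτ : ‖τ‖ = 1)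
    (hell : ‖τ - 1‖ > 2 * ‖α‖) :
    ∃ z₀ : ℂ, ‖z₀‖ < 1 ∧ τ * ((z₀ - α) / (1 - (starRingEnd ℂ) α * z₀)) = z₀ ∧
      ∀ z : ℂ, ‖z‖ ≤ 1 →
        τ * ((z - α) / (1 - (starRingEnd ℂ) α * z)) = z → z = z₀ := by
  rcases eq_or_ne α 0 with h0 | h0
  · subst h0
    have hτ1 : τ ≠ 1 := by
      intro h
      simp [h] at hell
    refine ⟨0, by simp, by simp, ?_⟩
    intro z hz hfix
    simp only [sub_zero, map_zero, zero_mul, mul_zero, div_one] at hfix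
    have : (τ - 1) * z = 0 := by linear_combination hfix
    rcases mul_eq_zero.1 this with h | h
    · exact absurd (by linear_combination h) hτ1
    · exact h
  · set a : ℂ := (starRingEnd ℂ) α with ha
    have ha0 : a ≠ 0 := by simpa [ha] using h0
    have haabs : ‖a‖ = ‖α‖ := by simp [ha]
    have hα0 : 0 < ‖α‖ := norm_pos_iff.mpr h0
    obtain ⟨s, hs⟩ := IsAlgClosed.exists_pow_nat_eq ((τ-1)^2 + 4*a*τ*α) (n := 2) (by norm_num)
    set r₁ : ℂ := ((1-τ) + s)/(2*a) with hr₁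
    set r₂ : ℂ := ((1-τ) - s)/(2*a) with hr₂
    have key : ∀ z : ℂ, a*z^2 + (τ-1)*z - τ*α = a*(z-r₁)*(z-r₂) := by
      intro z
      rw [hr₁, hr₂]
      field_simp
      linear_combination hs
    have hprod : ‖r₁‖ * ‖r₂‖ = 1 := by
      have : r₁ * r₂ = -(τ*α)/a := by
        rw [hr₁, hr₂]
        field_simp
        linear_combination -hs
      have h2 : ‖r₁ * r₂‖ = 1 := by
        rw [this, norm_div, norm_neg, norm_mul, hτ, haabs, one_mul,
          div_self (ne_of_gt hα0)]
      rwa [norm_mul] at h2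
    have hsum : 2 < ‖r₁‖ + ‖r₂‖ := by
      have hsumval : r₁ + r₂ = (1-τ)/a := by
        rw [hr₁, hr₂]; field_simp; ring
      have h3 : ‖r₁ + r₂‖ = ‖τ - 1‖ / ‖α‖ := by
        rw [hsumval, norm_div, haabs]
        congr 1
        rw [show (1:ℂ) - τ = -(τ-1) by ring, norm_neg]
      have h4 : 2 < ‖r₁ + r₂‖ := by
        rw [h3]
        rw [lt_div_iff₀ hα0]
        linarith
      calc 2 < ‖r₁ + r₂‖ := h4
        _ ≤ ‖r₁‖ + ‖r₂‖ := norm_add_le _ _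
    rcases real_aux _ _ (norm_nonneg r₁) hprod hsum with ⟨h1, h2⟩ | ⟨h1, h2⟩
    · exact ⟨r₁, main_aux α τ a r₁ r₂ hα ha ha0 h1 h2 key⟩
    · refine ⟨r₂, main_aux α τ a r₂ r₁ hα ha ha0 h1 h2 ?_⟩
      intro z
      rw [key z]; ring
end

section
/- An automorphism m of 𝔻 is irrotational if and only if there exists η ∈ 𝕋 such that m(η) = η and m(-η) = -η (where m is extended to the closed disc via the same Möbius formula). -/
open Complex

theorem irrotational_iff_antipodal_fixed_points (α τ : ℂ) (hα : ‖α‖ < 1)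
    (hτ : ‖τ‖ = 1) :
    τ = 1 ↔
      ∃ η : ℂ, ‖η‖ = 1 ∧
        τ * ((η - α) / (1 - (starRingEnd ℂ) α * η)) = η ∧
        τ * ((-η - α) / (1 - (starRingEnd ℂ) α * (-η))) = -η := by
  have hden : ∀ η : ℂ, ‖η‖ = 1 → (1 - (starRingEnd ℂ) α * η) ≠ 0 := by
    intro η hη h
    have h1 : (starRingEnd ℂ) α * η = 1 := by linear_combination -h
    have : ‖(starRingEnd ℂ) α * η‖ = 1 := by rw [h1]; simp
    rw [norm_mul, Complex.norm_conj, hη, mul_one] at this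
    exact absurd this (ne_of_lt hα)
  constructor
  · rintro rfl
    by_cases hα0 : α = 0
    · exact ⟨1, by simp, by simp [hα0], by simp [hα0]⟩
    · set r : ℂ := (‖α‖ : ℂ) with hr
      have hrne : r ≠ 0 := by
        simp [hr, Complex.ofReal_ne_zero, norm_ne_zero_iff, hα0]
      set η : ℂ := α / r with hηdef
      have hη : ‖η‖ = 1 := by
        simp [hηdef, norm_div, hr, Complex.norm_real, Real.norm_eq_abs, _root_.abs_of_nonneg (norm_nonneg α),
          div_self (norm_ne_zero_iff.mpr hα0)]
      have hkey : (starRingEnd ℂ) α * η ^ 2 = α := by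
        have hc : (starRingEnd ℂ) α * α = r ^ 2 := by
          rw [hr]
          rw [mul_comm, Complex.mul_conj]
          rw [Complex.normSq_eq_norm_sq]
          push_cast
          ring
        rw [hηdef, div_pow, mul_div_assoc', div_eq_iff (pow_ne_zero 2 hrne)]
        linear_combination α * hc
      have hd1 := hden η hη
      have hd2 := hden (-η) (by simpa using hη)
      refine ⟨η, hη, ?_, ?_⟩
      · rw [one_mul, div_eq_iff hd1]
        linear_combination hkey
      · rw [one_mul, div_eq_iff hd2]
        linear_combination hkey
  · rintro ⟨η, hη, h1, h2⟩
    have hd1 := hden η hη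
    have hd2 := hden (-η) (by simpa using hη)
    rw [← mul_div_assoc, div_eq_iff hd1] at h1
    rw [← mul_div_assoc, div_eq_iff hd2] at h2
    have hηne : η ≠ 0 := fun h => by simp [h] at hη
    have h3 : 2 * η * (τ - 1) = 0 := by linear_combination h1 - h2
    rcases mul_eq_zero.mp h3 with h | h
    · rcases mul_eq_zero.mp h with h | h
      · norm_num at h
      · exact absurd h hηne
    · exact sub_eq_zero.mp h
end

section
/- For any α ∈ 𝔻, the composition b_α ∘ b_α equals b_β where β = 2α/(1 + |α|²); in particular β ∈ 𝔻, so the composition of an irrotational automorphism with itself is irrotational. -/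
open Complex

theorem blaschke_self_comp (α : ℂ) (hα : ‖α‖ < 1) :
    ‖2 * α / (1 + (‖α‖ : ℂ) ^ 2)‖ < 1 ∧
    ∀ z : ℂ, ‖z‖ < 1 →
      (((z - α) / (1 - (starRingEnd ℂ) α * z)) - α) /
          (1 - (starRingEnd ℂ) α * ((z - α) / (1 - (starRingEnd ℂ) α * z))) =
        (z - 2 * α / (1 + (‖α‖ : ℂ) ^ 2)) /
          (1 - (starRingEnd ℂ) (2 * α / (1 + (‖α‖ : ℂ) ^ 2)) * z) := by
  set a := ‖α‖ with ha
  have ha0 : 0 ≤ a := norm_nonneg α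
  have hpos : (0:ℝ) < 1 + a ^ 2 := by positivity
  have hne : (1 : ℂ) + (a:ℂ)^2 ≠ 0 := by
    have : ((1 + a^2 : ℝ) : ℂ) ≠ 0 := by exact_mod_cast hpos.ne'
    push_cast at this; exact this
  have hlt : 2 * a < 1 + a ^ 2 := by nlinarith
  constructor
  · rw [norm_div, norm_mul]
    have habs : ‖(1:ℂ) + (a:ℂ)^2‖ = 1 + a^2 := by
      have : ((1 + a^2 : ℝ) : ℂ) = (1:ℂ) + (a:ℂ)^2 := by push_cast; ring
      rw [← this, Complex.norm_real, Real.norm_eq_abs, abs_of_pos hpos]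
    rw [habs]
    rw [div_lt_one hpos]
    simpa using hlt
  · intro z hz
    have hsq : ((a:ℂ))^2 = (starRingEnd ℂ) α * α := by
      rw [ha, ← Complex.ofReal_pow, Complex.sq_norm, Complex.normSq_eq_conj_mul_self]
    have hd1 : (1:ℂ) - (starRingEnd ℂ) α * z ≠ 0 := by
      intro h
      have : ‖(starRingEnd ℂ) α * z‖ < 1 := by
        rw [norm_mul, Complex.norm_conj]
        calc a * ‖z‖ ≤ a * 1 := by
              apply mul_le_mul_of_nonneg_left hz.le ha0
          _ = a := by ring
          _ < 1 := hα
      have h1 : (1:ℂ) = (starRingEnd ℂ) α * z := by linear_combination h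
      rw [← h1] at this; simp at this
    have hd2 : (1:ℂ) + (a:ℂ)^2 - 2 * ((starRingEnd ℂ) α * z) ≠ 0 := by
      intro h
      have habs2 : ‖2 * ((starRingEnd ℂ) α * z)‖ < 1 + a^2 := by
        rw [norm_mul, norm_mul, Complex.norm_conj]
        simp only [Complex.norm_two]
        rw [← ha]
        nlinarith [norm_nonneg z]
      have h1 : ((1 + a^2 : ℝ):ℂ) = 2 * ((starRingEnd ℂ) α * z) := by
        push_cast; linear_combination h
      rw [← h1, Complex.norm_real, Real.norm_eq_abs, abs_of_pos hpos] at habs2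
      exact lt_irrefl _ habs2
    have hconj : (starRingEnd ℂ) (2 * α / (1 + (a:ℂ)^2)) =
        2 * (starRingEnd ℂ) α / (1 + (a:ℂ)^2) := by
      simp [map_div₀, map_ofNat, Complex.conj_ofReal]
    rw [hconj]
    have hd3 : 1 - (starRingEnd ℂ) α * ((z - α) / (1 - (starRingEnd ℂ) α * z)) ≠ 0 := by
      have e : 1 - (starRingEnd ℂ) α * ((z - α) / (1 - (starRingEnd ℂ) α * z)) =
          ((1:ℂ) + (a:ℂ)^2 - 2 * ((starRingEnd ℂ) α * z)) / (1 - (starRingEnd ℂ) α * z) := by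
        field_simp
        linear_combination -hsq
      rw [e]
      exact div_ne_zero hd2 hd1
    have hd4 : 1 - 2 * (starRingEnd ℂ) α / (1 + (a:ℂ)^2) * z ≠ 0 := by
      intro h
      apply hd2
      field_simp at h
      linear_combination h
    rw [div_eq_div_iff hd3 hd4]
    have hd1' : 1 - z * (starRingEnd ℂ) α ≠ 0 := by rwa [mul_comm] at hd1
    field_simp
    linear_combination (2*z^2*((starRingEnd ℂ) α) - 2*α) * hsq
end

section
/- For every ω ∈ 𝕋, the function Φ_ω(s, p) = (2ωp - s)/(2 - ωs) maps the open symmetrized bidisc G into the open unit disc 𝔻, i.e., for all z, w ∈ 𝔻, |(2ω·zw - (z+w))/(2 - ω(z+w))| < 1. -/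
open Complex

lemma key_abs_lt (a b : ℂ) (ha : ‖a‖ < 1) (hb : ‖b‖ < 1) :
    ‖2 * a * b - (a + b)‖ < ‖2 - (a + b)‖ := by
  have hident : Complex.normSq (2 - (a + b)) - Complex.normSq (2 * a * b - (a + b)) =
      2 * (1 - Complex.normSq a) * Complex.normSq (1 - b) +
      2 * (1 - Complex.normSq b) * Complex.normSq (1 - a) := by
    simp [Complex.normSq_apply]; ring
  have hna : Complex.normSq a < 1 := by
    have := Complex.sq_norm a
    nlinarith [norm_nonneg a]
  have hnb : Complex.normSq b < 1 := by
    have := Complex.sq_norm b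
    nlinarith [norm_nonneg b]
  have ha1 : a ≠ 1 := by
    intro h; rw [h] at ha; simp at ha
  have hpos : 0 < Complex.normSq (1 - a) := by
    rw [Complex.normSq_pos]
    intro h
    exact ha1 (sub_eq_zero.mp h).symm
  have hlt : Complex.normSq (2 * a * b - (a + b)) < Complex.normSq (2 - (a + b)) := by
    nlinarith [Complex.normSq_nonneg (1 - b)]
  rw [Complex.norm_def, Complex.norm_def]
  exact Real.sqrt_lt_sqrt (Complex.normSq_nonneg _) hlt

theorem Phi_omega_maps_G_to_disc (ω z w : ℂ) (hω : ‖ω‖ = 1)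
    (hz : ‖z‖ < 1) (hw : ‖w‖ < 1) :
    ‖(2 * ω * (z * w) - (z + w)) / (2 - ω * (z + w))‖ < 1 := by
  have haz : ‖ω * z‖ < 1 := by
    rw [norm_mul, hω, one_mul]; exact hz
  have haw : ‖ω * w‖ < 1 := by
    rw [norm_mul, hω, one_mul]; exact hw
  have key := key_abs_lt (ω * z) (ω * w) haz haw
  have hnum : ‖2 * ω * (z * w) - (z + w)‖ =
      ‖2 * (ω * z) * (ω * w) - (ω * z + ω * w)‖ := by
    have hω0 : ω ≠ 0 := by
      intro h; rw [h] at hω; simp at hω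
    have : 2 * (ω * z) * (ω * w) - (ω * z + ω * w) = ω * (2 * ω * (z * w) - (z + w)) := by
      ring
    rw [this, norm_mul, hω, one_mul]
  have hden : ‖2 - ω * (z + w)‖ =
      ‖2 - (ω * z + ω * w)‖ := by
    ring_nf
  have hdpos : 0 < ‖2 - ω * (z + w)‖ := by
    have h2 : ‖ω * (z + w)‖ < 2 := by
      rw [norm_mul, hω, one_mul]
      calc ‖z + w‖ ≤ ‖z‖ + ‖w‖ := norm_add_le z w
        _ < 2 := by linarith
    have := norm_sub_norm_le (2 : ℂ) (ω * (z + w))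
    rw [Complex.norm_two] at this
    linarith
  rw [norm_div, div_lt_one hdpos, hnum, hden]
  rw [hden] at *
  exact lt_of_lt_of_le key (le_of_eq rfl)
end

section
/- Let σ ∈ (0,1) and τ ∈ 𝕋 with τ ≠ -1, and let m = b_σ ∘ r_τ ∘ b_σ. Then m, extended continuously to the closed disc, has exactly two fixed points both on 𝕋 (is hyperbolic) if and only if |(τ-1)/(τ+1)| < 2σ/(1-σ²). -/
open Complex

theorem standard_position_hyperbolic_iff (σ : ℝ) (hσ : σ ∈ Set.Ioo (0 : ℝ) 1)
    (τ : ℂ) (hτ : ‖τ‖ = 1) (hτne : τ ≠ -1)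
    (m : ℂ → ℂ)
    (hm : ∀ z : ℂ, m z = ((τ * ((z - (σ : ℂ)) / (1 - (σ : ℂ) * z))) - (σ : ℂ)) /
                  (1 - (σ : ℂ) * (τ * ((z - (σ : ℂ)) / (1 - (σ : ℂ) * z))))) :
    (∃ η₁ η₂ : ℂ, η₁ ≠ η₂ ∧ ‖η₁‖ = 1 ∧ ‖η₂‖ = 1 ∧
        ∀ z : ℂ, ‖z‖ ≤ 1 → (m z = z ↔ z = η₁ ∨ z = η₂)) ↔
      ‖(τ - 1) / (τ + 1)‖ < 2 * σ / (1 - σ ^ 2) := by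
  obtain ⟨hσ0, hσ1⟩ := hσ
  have hσ2 : (0:ℝ) < 1 - σ^2 := by nlinarith
  have hτ1 : τ + 1 ≠ 0 := fun h => hτne (by linear_combination h)
  have h1τ : (1:ℂ) + τ ≠ 0 := by rwa [add_comm]
  have hτ0 : τ ≠ 0 := fun h => by simp [h] at hτ
  set c : ℂ := (τ - 1)/(τ + 1) with hc
  have hnsq : Complex.normSq τ = 1 := by
    rw [Complex.normSq_eq_norm_sq, hτ]; norm_num
  have hconjτ : (starRingEnd ℂ) τ = τ⁻¹ := by
    rw [Complex.inv_def, hnsq]; simp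
  have hconj : (starRingEnd ℂ) c = -c := by
    rw [hc, map_div₀, map_sub, map_add, hconjτ, map_one]
    rw [show τ⁻¹ - 1 = (1 - τ)/τ by field_simp, show τ⁻¹ + 1 = (1 + τ)/τ by field_simp,
      div_div_div_cancel_right₀]
    · rw [add_comm τ 1, ← neg_div, neg_sub]
    · exact hτ0
  have hre : c.re = 0 := by
    have := congrArg Complex.re hconj
    simp at this
    linarith
  have hcti : c = (c.im : ℂ) * I := by
    apply Complex.ext <;> simp [hre]
  set s : ℝ := (1 - σ^2)/σ * c.im with hs
  have habs_c : ‖c‖ = |c.im| := by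
    nth_rewrite 1 [hcti]
    rw [norm_mul, Complex.norm_I, Complex.norm_real, Real.norm_eq_abs, mul_one]
  have hpos : (0:ℝ) < (1 - σ^2)/σ := div_pos hσ2 hσ0
  have habs_s : |s| = (1 - σ^2)/σ * |c.im| := by
    rw [hs, abs_mul, abs_of_pos hpos]
  have hiff2 : ‖c‖ < 2 * σ / (1 - σ ^ 2) ↔ |s| < 2 := by
    rw [habs_c, habs_s, lt_div_iff₀ hσ2, div_mul_eq_mul_div, div_lt_iff₀ hσ0]
    constructor <;> intro h <;> nlinarith
  have hσc : (σ:ℂ) ≠ 0 := by exact_mod_cast hσ0.ne'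
  have hsc : ((s:ℝ):ℂ) * I = (((1 - σ^2)/σ : ℝ):ℂ) * c := by
    rw [hcti, hs]; push_cast; ring
  have hsc2 : (σ:ℂ)*(τ+1) * (((s:ℝ):ℂ)*I) = ((1:ℂ) - (σ:ℂ)^2)*(τ-1) := by
    rw [hsc, hc]
    push_cast
    field_simp
  -- fixed point equation
  have hfix : ∀ z : ℂ, ‖z‖ ≤ 1 → (m z = z ↔ z^2 + (s:ℂ)*I*z - 1 = 0) := by
    intro z hz
    have hd1 : (1:ℂ) - σ*z ≠ 0 := by
      intro h
      have h2 : (σ:ℂ)*z = 1 := by linear_combination -h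
      have h3 := congrArg (‖·‖) h2
      rw [norm_mul, Complex.norm_real, norm_one, Real.norm_eq_abs, abs_of_pos hσ0] at h3
      nlinarith [norm_nonneg z]
    have hzsq : Complex.normSq z ≤ 1 := by
      rw [Complex.normSq_eq_norm_sq]; nlinarith [norm_nonneg z]
    have hzs : ‖z - σ‖ ≤ ‖1 - σ*z‖ := by
      rw [Complex.norm_def, Complex.norm_def]
      apply Real.sqrt_le_sqrt
      rw [Complex.normSq_apply] at hzsq
      simp only [Complex.normSq_apply, Complex.sub_re, Complex.sub_im, Complex.mul_re,
        Complex.mul_im, Complex.ofReal_re, Complex.ofReal_im, Complex.one_re, Complex.one_im]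
      nlinarith [mul_nonneg hσ2.le (by linarith : (0:ℝ) ≤ 1 - (z.re*z.re + z.im*z.im))]
    have hD : (1 - (σ:ℂ)*z) - σ*τ*(z-σ) ≠ 0 := by
      intro h
      have h2 : (1 - (σ:ℂ)*z) = σ*τ*(z-σ) := by linear_combination h
      have h3 := congrArg (‖·‖) h2
      rw [norm_mul, norm_mul, Complex.norm_real, hτ, Real.norm_eq_abs, abs_of_pos hσ0, mul_one] at h3
      have h4 : 0 < ‖1 - σ*z‖ := by
        simpa [norm_pos_iff] using hd1
      nlinarith
    have hden : 1 - (σ:ℂ) * (τ * ((z - σ) / (1 - σ * z)))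
        = ((1 - (σ:ℂ)*z) - σ*τ*(z-σ)) / (1 - σ*z) := by
      field_simp
      try ring
    have hnum : (τ * ((z - (σ:ℂ)) / (1 - σ * z))) - σ
        = (τ*(z-σ) - σ*(1 - σ*z)) / (1 - σ*z) := by
      rw [eq_div_iff hd1, sub_mul, mul_assoc, div_mul_cancel₀ _ hd1]
      try ring
    have hmz : m z = (τ*(z-σ) - σ*(1 - σ*z)) / ((1 - (σ:ℂ)*z) - σ*τ*(z-σ)) := by
      rw [hm z, hden, hnum, div_div_div_cancel_right₀]
      exact hd1
    have hpoly : (τ*(z-σ) - (σ:ℂ)*(1 - σ*z)) - z * ((1 - (σ:ℂ)*z) - σ*τ*(z-σ))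
        = (σ:ℂ)*(τ+1) * (z^2 + (s:ℂ)*I*z - 1) := by
      linear_combination (-z) * hsc2
    rw [hmz, div_eq_iff hD]
    constructor
    · intro h
      have h2 : (σ:ℂ)*(τ+1) * (z^2 + (s:ℂ)*I*z - 1) = 0 := by
        linear_combination h - hpoly
      rcases mul_eq_zero.mp h2 with h3 | h3
      · exact absurd h3 (mul_ne_zero hσc hτ1)
      · exact h3
    · intro h
      linear_combination hpoly + ((σ:ℂ)*(τ+1)) * h
  clear_value s c
  clear hs hc hcti hre hconj hconjτ hnsq hsc hsc2 habs_c habs_s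
  constructor
  · rintro ⟨η₁, η₂, hne, h1, h2, hfp⟩
    rw [hiff2]
    have e1 : η₁^2 + (s:ℂ)*I*η₁ - 1 = 0 :=
      (hfix η₁ h1.le).mp ((hfp η₁ h1.le).mpr (Or.inl rfl))
    have e2 : η₂^2 + (s:ℂ)*I*η₂ - 1 = 0 :=
      (hfix η₂ h2.le).mp ((hfp η₂ h2.le).mpr (Or.inr rfl))
    have hsum : η₁ + η₂ = -((s:ℂ)*I) := by
      have h3 : (η₁ - η₂) * (η₁ + η₂ + (s:ℂ)*I) = 0 := by linear_combination e1 - e2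
      rcases mul_eq_zero.mp h3 with h4 | h4
      · exact absurd (sub_eq_zero.mp h4) hne
      · linear_combination h4
    have hn1 : η₁.re * η₁.re + η₁.im * η₁.im = 1 := by
      rw [← Complex.normSq_apply, Complex.normSq_eq_norm_sq, h1]; norm_num
    have hn2 : η₂.re * η₂.re + η₂.im * η₂.im = 1 := by
      rw [← Complex.normSq_apply, Complex.normSq_eq_norm_sq, h2]; norm_num
    have hd : 0 < (η₁.re - η₂.re)*(η₁.re - η₂.re) + (η₁.im - η₂.im)*(η₁.im - η₂.im) := by
      have h5 : 0 < Complex.normSq (η₁ - η₂) := by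
        rw [Complex.normSq_pos]; exact sub_ne_zero.mpr hne
      rwa [Complex.normSq_apply, Complex.sub_re, Complex.sub_im] at h5
    have hlt : Complex.normSq (η₁ + η₂) < 4 := by
      rw [Complex.normSq_apply, Complex.add_re, Complex.add_im]
      nlinarith
    have habs_sum : ‖η₁ + η₂‖ < 2 := by
      have h5 : ‖η₁ + η₂‖ ^ 2 < 4 := by
        rw [Complex.sq_norm]; exact hlt
      nlinarith [norm_nonneg (η₁ + η₂)]
    have h6 : ‖(s:ℂ)*I‖ < 2 := by
      rw [show ((s:ℂ)*I) = -(η₁+η₂) by rw [hsum, neg_neg], norm_neg]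
      exact habs_sum
    rwa [norm_mul, Complex.norm_I, Complex.norm_real, Real.norm_eq_abs, mul_one] at h6
  · intro h
    rw [hiff2] at h
    have hs4 : s^2 < 4 := by nlinarith [neg_abs_le s, le_abs_self s, abs_nonneg s]
    set q : ℝ := Real.sqrt (4 - s^2) with hq
    have hq0 : 0 < q := Real.sqrt_pos.mpr (by linarith)
    have hq2 : q^2 = 4 - s^2 := Real.sq_sqrt (by linarith)
    have hq2c : ((q:ℝ):ℂ)^2 = 4 - ((s:ℝ):ℂ)^2 := by exact_mod_cast hq2
    have hI2 : (Complex.I)^2 = -1 := Complex.I_sq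
    refine ⟨(↑(q/2) : ℂ) + (↑(-s/2) : ℂ)*I, (↑(-q/2) : ℂ) + (↑(-s/2) : ℂ)*I, ?_, ?_, ?_, ?_⟩
    · intro hcontra
      rw [Complex.ext_iff] at hcontra
      simp only [Complex.add_re, Complex.ofReal_re, Complex.mul_re, Complex.I_re,
        Complex.I_im, Complex.ofReal_im, Complex.add_im, Complex.mul_im] at hcontra
      have := hcontra.1
      norm_num at this
      linarith
    · rw [Complex.norm_def, Complex.normSq_add_mul_I]
      rw [show (q/2)^2 + (-s/2)^2 = 1 by nlinarith, Real.sqrt_one]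
    · rw [Complex.norm_def, Complex.normSq_add_mul_I]
      rw [show (-q/2)^2 + (-s/2)^2 = 1 by nlinarith, Real.sqrt_one]
    · intro z hz
      rw [hfix z hz]
      constructor
      · intro hroot
        have hsplit : (z - ((↑(q/2) : ℂ) + (↑(-s/2) : ℂ)*I)) *
            (z - ((↑(-q/2) : ℂ) + (↑(-s/2) : ℂ)*I)) = 0 := by
          linear_combination (norm := (push_cast; ring1))
            hroot - (1/4 : ℂ) * hq2c + ((s:ℂ)^2/4) * hI2
        rcases mul_eq_zero.mp hsplit with h4 | h4
        · exact Or.inl (sub_eq_zero.mp h4)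
        · exact Or.inr (sub_eq_zero.mp h4)
      · rintro (rfl | rfl)
        · linear_combination (norm := (push_cast; ring1))
            (1/4 : ℂ) * hq2c - ((s:ℂ)^2/4) * hI2
        · linear_combination (norm := (push_cast; ring1))
            (1/4 : ℂ) * hq2c - ((s:ℂ)^2/4) * hI2
end
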